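/- For Hermitian operators A, B and a density matrix ρ, the Robertson-Heisenberg uncertainty relation holds: ⟨ΔA⟩²_ρ ⟨ΔB⟩²_ρ ≥ [(1/(2i)) Tr([A,B]ρ)]² + [(1/2)Tr({A,B}ρ) − ⟨A⟩_ρ⟨B⟩_ρ]². -/

import Mathlib

open Matrix
open scoped ComplexOrder

open scoped MatrixOrder in
lemma cs_trace {d : ℕ} (ρ : Matrix (Fin d) (Fin d) ℂ) (hρ : ρ.PosSemidef)
    (X Y : Matrix (Fin d) (Fin d) ℂ) :
    ‖(Xᴴ * Y * ρ).trace‖ ^ 2 ≤ ((Xᴴ * X * ρ).trace).re * ((Yᴴ * Y * ρ).trace).re := by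
  set S := CFC.sqrt ρ with hS
  have hSh : Sᴴ = S := (CFC.sqrt_nonneg ρ).posSemidef.isHermitian
  have hSS : S * S = ρ := CFC.sqrt_mul_sqrt_self ρ hρ.nonneg
  set v : Matrix (Fin d) (Fin d) ℂ → EuclideanSpace ℂ (Fin d × Fin d) :=
    fun M => WithLp.toLp 2 (fun p : Fin d × Fin d => (M * S) p.1 p.2) with hv
  have key : ∀ M N : Matrix (Fin d) (Fin d) ℂ,
      (inner ℂ (v M) (v N) : ℂ) = (Mᴴ * N * ρ).trace := by
    intro M N
    have h1 : (Mᴴ * N * ρ).trace = ((M * S)ᴴ * (N * S)).trace := by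
      have e : (M * S)ᴴ * (N * S) = S * (Mᴴ * N * S) := by
        rw [conjTranspose_mul, hSh]; simp only [mul_assoc]
      conv_rhs => rw [e, trace_mul_comm]
      rw [mul_assoc (Mᴴ * N) S S, hSS]
    rw [h1]
    rw [trace]
    simp only [PiLp.inner_apply, RCLike.inner_apply, diag_apply, mul_apply,
      conjTranspose_apply, Fintype.sum_prod_type, hv, PiLp.toLp_apply]
    rw [Finset.sum_comm]
    simp [Complex.star_def, mul_comm]
  have cs := norm_inner_le_norm (𝕜 := ℂ) (v X) (v Y)
  have h2 : ‖(inner ℂ (v X) (v Y) : ℂ)‖ ^ 2 ≤ ‖v X‖ ^ 2 * ‖v Y‖ ^ 2 := by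
    rw [← mul_pow]
    exact pow_le_pow_left₀ (norm_nonneg _) cs 2
  rw [key] at h2
  rwa [← inner_self_eq_norm_sq (𝕜 := ℂ) (v X), ← inner_self_eq_norm_sq (𝕜 := ℂ) (v Y),
    key, key] at h2

lemma herm_trace_real {d : ℕ} {ρ A : Matrix (Fin d) (Fin d) ℂ}
    (hρ : ρ.IsHermitian) (hA : A.IsHermitian) :
    (ρ * A).trace = (((ρ * A).trace).re : ℂ) := by
  have h : star ((ρ * A).trace) = (ρ * A).trace := by
    rw [← trace_conjTranspose, conjTranspose_mul, hρ.eq, hA.eq, trace_mul_comm]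
  exact (Complex.conj_eq_iff_re.mp h).symm

theorem stmt6 {d : ℕ} (ρ A B : Matrix (Fin d) (Fin d) ℂ)
    (hρ : ρ.PosSemidef) (htr : ρ.trace = 1)
    (hA : A.IsHermitian) (hB : B.IsHermitian) :
    (((ρ * A ^ 2).trace).re - ((ρ * A).trace).re ^ 2) *
        (((ρ * B ^ 2).trace).re - ((ρ * B).trace).re ^ 2) ≥
      ((((A * B - B * A) * ρ).trace / (2 * Complex.I)).re) ^ 2 +
        ((1 / 2 : ℝ) * (((A * B + B * A) * ρ).trace).re -
          ((A * ρ).trace).re * ((B * ρ).trace).re) ^ 2 := by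
  set a : ℝ := ((ρ * A).trace).re with ha
  set b : ℝ := ((ρ * B).trace).re with hb
  have haC : (ρ * A).trace = (a : ℂ) := herm_trace_real hρ.1 hA
  have hbC : (ρ * B).trace = (b : ℂ) := herm_trace_real hρ.1 hB
  have haC' : (A * ρ).trace = (a : ℂ) := by rw [trace_mul_comm]; exact haC
  have hbC' : (B * ρ).trace = (b : ℂ) := by rw [trace_mul_comm]; exact hbC
  set A' : Matrix (Fin d) (Fin d) ℂ := A - (a : ℂ) • 1 with hA'def
  set B' : Matrix (Fin d) (Fin d) ℂ := B - (b : ℂ) • 1 with hB'def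
  have hA'h : A'ᴴ = A' := by
    simp [hA'def, conjTranspose_smul, hA.eq, Complex.star_def, Complex.conj_ofReal]
  have hB'h : B'ᴴ = B' := by
    simp [hB'def, conjTranspose_smul, hB.eq, Complex.star_def, Complex.conj_ofReal]
  -- expansion lemma
  have expand : ∀ (M N : Matrix (Fin d) (Fin d) ℂ) (c e : ℝ),
      (M - (c:ℂ)•1) * (N - (e:ℂ)•1) * ρ
        = M * N * ρ - (e:ℂ)•(M*ρ) - (c:ℂ)•(N*ρ) + ((c*e : ℝ):ℂ)•ρ := by
    intro M N c e
    simp only [sub_mul, mul_sub, smul_mul_assoc, mul_smul_comm, one_mul, mul_one,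
      smul_smul, Complex.ofReal_mul, smul_sub, smul_add]
    rw [mul_comm (e : ℂ) (c : ℂ)]
    abel
  have t1 : (A'ᴴ * A' * ρ).trace = (ρ * A ^ 2).trace - ((a^2 : ℝ) : ℂ) := by
    rw [hA'h, hA'def, expand A A a a]
    simp only [trace_add, trace_sub, trace_smul, haC', htr, smul_eq_mul, mul_one]
    rw [trace_mul_comm, ← pow_two]
    push_cast
    ring
  have t2 : (B'ᴴ * B' * ρ).trace = (ρ * B ^ 2).trace - ((b^2 : ℝ) : ℂ) := by
    rw [hB'h, hB'def, expand B B b b]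
    simp only [trace_add, trace_sub, trace_smul, hbC', htr, smul_eq_mul, mul_one]
    rw [trace_mul_comm, ← pow_two]
    push_cast
    ring
  set w : ℂ := (A * B * ρ).trace with hw
  have t3 : (A'ᴴ * B' * ρ).trace = w - ((a*b : ℝ) : ℂ) := by
    rw [hA'h, hA'def, hB'def, expand A B a b]
    simp only [trace_add, trace_sub, trace_smul, haC', hbC', htr, smul_eq_mul, mul_one, hw]
    try push_cast
    try ring
  have hstar : (B * A * ρ).trace = star w := by
    rw [hw, ← trace_conjTranspose]
    rw [conjTranspose_mul, conjTranspose_mul, hρ.1.eq, hA.eq, hB.eq, trace_mul_comm]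
    try rw [mul_assoc]
  -- rhs identification
  have hcomm : ((A * B - B * A) * ρ).trace = w - star w := by
    rw [sub_mul, trace_sub, hstar, hw]
  have hanti : ((A * B + B * A) * ρ).trace = w + star w := by
    rw [add_mul, trace_add, hstar, hw]
  have hre1 : (((A * B - B * A) * ρ).trace / (2 * Complex.I)).re = w.im := by
    rw [hcomm]
    have : w - star w = ((2 * w.im : ℝ) : ℂ) * Complex.I := Complex.sub_conj w
    rw [this]
    have h2 : ((2 * w.im : ℝ) : ℂ) * Complex.I / (2 * Complex.I) = ((w.im : ℝ) : ℂ) := by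
      field_simp [Complex.I_ne_zero]
      push_cast
      ring
    rw [h2, Complex.ofReal_re]
  have hre2 : (1 / 2 : ℝ) * (((A * B + B * A) * ρ).trace).re = w.re := by
    rw [hanti, Complex.star_def, Complex.add_conj]
    rw [Complex.ofReal_re]
    ring
  have cs := cs_trace ρ hρ A' B'
  rw [t3] at cs
  have hnorm : ‖w - ((a*b : ℝ) : ℂ)‖ ^ 2 = (w.re - a*b)^2 + w.im^2 := by
    rw [Complex.sq_norm, Complex.normSq_apply]
    simp [Complex.sub_re, Complex.sub_im]
    ring
  rw [hnorm, t1, t2] at cs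
  simp only [Complex.sub_re, Complex.ofReal_re] at cs
  have hAρ : ((A * ρ).trace).re = a := by rw [haC', Complex.ofReal_re]
  have hBρ : ((B * ρ).trace).re = b := by rw [hbC', Complex.ofReal_re]
  rw [hre1, hre2, hAρ, hBρ]
  calc w.im ^ 2 + (w.re - a * b) ^ 2
      = (w.re - a*b)^2 + w.im^2 := by ring
    _ ≤ ((ρ * A ^ 2).trace.re - a^2) * ((ρ * B ^ 2).trace.re - b^2) := cs
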